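/- Let P be a finite point set in a metric space, and let p ∈ P have nearest-neighbor distance at least r, where r is strictly greater than the k-th longest MST edge of P. Then the k-th longest MST edge of P \ {p} (with k replaced by k−1) equals the k-th longest MST edge of P; specifically, deleting p and decrementing k leaves the target value ℓ_MST(P, k) unchanged: ℓ_MST(P, k) = ℓ_MST(P \ {p}, k−1). -/

import Mathlib

def connRel {X : Type*} [MetricSpace X] (P : Set X) (r : ℝ) (a b : X) : Prop :=
  a ∈ P ∧ b ∈ P ∧ dist a b ≤ r

def component {X : Type*} [MetricSpace X] (P : Set X) (r : ℝ) (p : X) : Set X :=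
  {q ∈ P | Relation.ReflTransGen (connRel P r) p q}

noncomputable def numCC {X : Type*} [MetricSpace X] (P : Set X) (r : ℝ) : ℕ :=
  ((component P r) '' P).ncard

noncomputable def ellMST {X : Type*} [MetricSpace X] (P : Set X) (k : ℕ) : ℝ :=
  sInf {r : ℝ | 0 ≤ r ∧ numCC P r ≤ k}

section aux
variable {X : Type*} [MetricSpace X] {P : Set X} {p : X} {r s : ℝ}

lemma connRel_symm (P : Set X) (s : ℝ) : Symmetric (connRel P s) := by
  rintro a b ⟨ha, hb, hd⟩
  exact ⟨hb, ha, by rwa [dist_comm]⟩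

lemma reach_p_eq (hfar : ∀ q ∈ P, q ≠ p → r ≤ dist q p) (hs : s < r) {q : X}
    (h : Relation.ReflTransGen (connRel P s) p q) : q = p := by
  induction h with
  | refl => rfl
  | @tail b c h1 h2 ih =>
    subst ih
    rcases h2 with ⟨hpP, hcP, hd⟩
    by_contra hne
    have h3 := hfar _ hcP hne
    rw [dist_comm] at h3
    linarith

lemma reach_ne_p (hfar : ∀ q ∈ P, q ≠ p → r ≤ dist q p) (hs : s < r) {q x : X}
    (hq : q ≠ p) (h : Relation.ReflTransGen (connRel P s) q x) : x ≠ p := by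
  intro hx; subst hx
  exact hq (reach_p_eq hfar hs ((@Relation.ReflTransGen.stdSymm _ (connRel P s) ⟨fun _ _ hab => connRel_symm P s hab⟩).symm _ _ h))

lemma reach_diff (hfar : ∀ q ∈ P, q ≠ p → r ≤ dist q p) (hs : s < r) {q x : X}
    (hq : q ≠ p) :
    Relation.ReflTransGen (connRel P s) q x ↔
      Relation.ReflTransGen (connRel (P \ {p}) s) q x := by
  constructor
  · intro h
    induction h with
    | refl => exact .refl
    | @tail b c h1 h2 ih =>
      have hb : b ≠ p := reach_ne_p hfar hs hq h1
      have hc : c ≠ p := reach_ne_p hfar hs hq (h1.tail h2)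
      exact ih.tail ⟨⟨h2.1, hb⟩, ⟨h2.2.1, hc⟩, h2.2.2⟩
  · intro h
    exact Relation.ReflTransGen.mono (fun a b hab => ⟨hab.1.1, hab.2.1.1, hab.2.2⟩) _ _ h

lemma component_p (hp : p ∈ P) (hfar : ∀ q ∈ P, q ≠ p → r ≤ dist q p) (hs : s < r) :
    component P s p = {p} := by
  ext x
  simp only [component, Set.mem_setOf_eq, Set.mem_singleton_iff]
  constructor
  · rintro ⟨-, h⟩; exact reach_p_eq hfar hs h
  · rintro rfl; exact ⟨hp, .refl⟩

lemma component_diff (hfar : ∀ q ∈ P, q ≠ p → r ≤ dist q p) (hs : s < r) {q : X}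
    (hq : q ≠ p) : component P s q = component (P \ {p}) s q := by
  ext x
  simp only [component, Set.mem_setOf_eq, Set.mem_diff, Set.mem_singleton_iff]
  constructor
  · rintro ⟨hxP, h⟩
    exact ⟨⟨hxP, reach_ne_p hfar hs hq h⟩, (reach_diff hfar hs hq).1 h⟩
  · rintro ⟨⟨hxP, -⟩, h⟩
    exact ⟨hxP, (reach_diff hfar hs hq).2 h⟩

lemma numCC_diff (hfin : P.Finite) (hp : p ∈ P)
    (hfar : ∀ q ∈ P, q ≠ p → r ≤ dist q p) (hs : s < r) :
    numCC P s = numCC (P \ {p}) s + 1 := by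
  have hP : P = insert p (P \ {p}) := by
    rw [Set.insert_diff_singleton, Set.insert_eq_of_mem hp]
  have himg : component P s '' P
      = insert {p} (component (P \ {p}) s '' (P \ {p})) := by
    rw [show component P s '' P = insert (component P s p) (component P s '' (P \ {p})) from
      by rw [← Set.image_insert_eq, ← hP], component_p hp hfar hs]
    congr 1
    apply Set.image_congr
    intro q hq
    exact component_diff hfar hs hq.2
  have hnot : ({p} : Set X) ∉ component (P \ {p}) s '' (P \ {p}) := by
    rintro ⟨q, hq, hqc⟩
    have : q ∈ component (P \ {p}) s q := ⟨hq, .refl⟩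
    rw [hqc] at this
    exact hq.2 this
  have hfin2 : (component (P \ {p}) s '' (P \ {p})).Finite :=
    (hfin.diff).image _
  rw [numCC, numCC, himg, Set.ncard_insert_of_notMem hnot hfin2]

lemma exists_small (hfin : P.Finite) (hp : p ∈ P) {k : ℕ} (hk : 1 ≤ k) :
    ∃ s : ℝ, 0 ≤ s ∧ numCC P s ≤ k := by
  obtain ⟨C, hC⟩ := Metric.isBounded_iff.1 hfin.isBounded
  refine ⟨max C 0, le_max_right _ _, ?_⟩
  have hcomp : ∀ q ∈ P, component P (max C 0) q = P := by
    intro q hq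
    ext x
    simp only [component, Set.mem_setOf_eq]
    constructor
    · rintro ⟨hxP, -⟩; exact hxP
    · intro hxP
      exact ⟨hxP, Relation.ReflTransGen.single
        ⟨hq, hxP, le_trans (hC hq hxP) (le_max_left _ _)⟩⟩
  have : component P (max C 0) '' P = {P} := by
    apply Set.eq_singleton_iff_nonempty_unique_mem.2
    exact ⟨⟨P, ⟨p, hp, hcomp p hp⟩⟩, by rintro _ ⟨q, hq, rfl⟩; exact hcomp q hq⟩
  rw [numCC, this, Set.ncard_singleton]
  exact hk

end aux

/-- If `p ∈ P` has nearest-neighbor distance at least `r`, where `r` is strictly greater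
than the `k`-th longest MST edge of `P`, then deleting `p` and decrementing `k` leaves the
`k`-th longest MST edge unchanged: `ℓ_MST(P, k) = ℓ_MST(P \ {p}, k-1)`. -/
theorem stmt17 {X : Type*} [MetricSpace X] (P : Set X) (hfin : P.Finite)
    (p : X) (hp : p ∈ P) (k : ℕ) (hk : 2 ≤ k) (r : ℝ)
    (hfar : ∀ q ∈ P, q ≠ p → r ≤ dist q p)
    (hgt : ellMST P k < r) :
    ellMST P k = ellMST (P \ {p}) (k - 1) := by
  set A := {s : ℝ | 0 ≤ s ∧ numCC P s ≤ k} with hA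
  set B := {s : ℝ | 0 ≤ s ∧ numCC (P \ {p}) s ≤ k - 1} with hB
  have hAB : ∀ s : ℝ, s < r → (s ∈ A ↔ s ∈ B) := by
    intro s hsr
    have h := numCC_diff hfin hp hfar hsr
    simp only [hA, hB, Set.mem_setOf_eq, h]
    constructor <;> rintro ⟨h1, h2⟩ <;> exact ⟨h1, by omega⟩
  have hAne : A.Nonempty := exists_small hfin hp (by omega)
  have hAbdd : BddBelow A := ⟨0, fun x hx => hx.1⟩
  have hBbdd : BddBelow B := ⟨0, fun x hx => hx.1⟩
  have hgt' : sInf A < r := hgt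
  obtain ⟨a0, ha0A, ha0r⟩ := exists_lt_of_csInf_lt hAne hgt'
  have ha0B : a0 ∈ B := (hAB a0 ha0r).1 ha0A
  have hBne : B.Nonempty := ⟨a0, ha0B⟩
  show sInf A = sInf B
  apply le_antisymm
  · apply le_csInf hBne
    intro b hb
    rcases lt_or_ge b r with h | h
    · exact csInf_le hAbdd ((hAB b h).2 hb)
    · linarith
  · apply le_csInf hAne
    intro a ha
    rcases lt_or_ge a r with h | h
    · exact csInf_le hBbdd ((hAB a h).1 ha)
    · calc sInf B ≤ a0 := csInf_le hBbdd ha0B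
        _ ≤ a := by linarith
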